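/- Let Δ=(D,W) be an NMU default theory and let E be an extension of Δ with generating-default sequence δ₁,…,δₙ and signature set liter(E). Then for every literal l ∈ liter(E), either l ∈ W (so l itself is a proof of l), or some subsequence of δ₁,…,δₙ is a proof of l w.r.t. Δ and liter(E). -/

import Mathlib

/-! Propositional formulas -/

inductive Form (V : Type) : Type
  | atom : V → Form V
  | tru  : Form V
  | fals : Form V
  | neg  : Form V → Form V
  | conj : Form V → Form V → Form V
  | disj : Form V → Form V → Form V

/-- Satisfaction of a formula by a valuation. -/
def Form.sat {V : Type} (v : V → Prop) : Form V → Prop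
  | .atom a => v a
  | .tru => True
  | .fals => False
  | .neg φ => ¬ Form.sat v φ
  | .conj φ ψ => Form.sat v φ ∧ Form.sat v ψ
  | .disj φ ψ => Form.sat v φ ∨ Form.sat v ψ

/-- Logical logClosure `T*` of a set of formulas. -/
def logClosure {V : Type} (T : Set (Form V)) : Set (Form V) :=
  { φ | ∀ v : V → Prop, (∀ ψ ∈ T, Form.sat v ψ) → Form.sat v φ }

/-- A default rule `α : β₁,…,β_m / γ` (`pre = none` means the prerequisite is missing). -/
structure Default (V : Type) : Type where
  pre   : Option (Form V)
  justs : List (Form V)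
  concl : Form V

/-- The stage sets `E_i` relative to a candidate extension `E`:
`E_0 = W`, `E_{i+1} = E_i* ∪ {γ | α:β₁,…,β_m/γ ∈ D, α ∈ E_i, ¬β₁ ∉ E, …, ¬β_m ∉ E}`. -/
def extStage {V : Type} (D : Set (Default V)) (W : Set (Form V)) (E : Set (Form V)) :
    ℕ → Set (Form V)
  | 0 => W
  | i + 1 =>
      logClosure (extStage D W E i) ∪
        { φ | ∃ d ∈ D, d.concl = φ ∧ (∀ a ∈ d.pre, a ∈ extStage D W E i) ∧
              ∀ b ∈ d.justs, Form.neg b ∉ E }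

/-- `E` is an extension of the default theory `(D, W)`. -/
def IsExtension {V : Type} (D : Set (Default V)) (W : Set (Form V)) (E : Set (Form V)) : Prop :=
  E = ⋃ i, extStage D W E i

/-- `(D, W) ⊨ φ`: every extension of `(D, W)` contains `φ`. -/
def entails {V : Type} (D : Set (Default V)) (W : Set (Form V)) (φ : Form V) : Prop :=
  ∀ E, IsExtension D W E → φ ∈ E

/-! Literals -/

/-- A literal: a letter together with a sign (`pos = true` means a positive literal). -/
structure Lit (V : Type) : Type where
  letter : V
  pos : Bool

/-- The formula corresponding to a literal. -/
def Lit.toForm {V : Type} (l : Lit V) : Form V :=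
  if l.pos then Form.atom l.letter else Form.neg (Form.atom l.letter)

/-- Negation of a literal (so that `¬¬a = a`). -/
def Lit.negate {V : Type} (l : Lit V) : Lit V := ⟨l.letter, !l.pos⟩

/-- A set of literals is consistent if it contains no complementary pair. -/
def LitConsistent {V : Type} (S : Set (Lit V)) : Prop := ∀ l ∈ S, l.negate ∉ S

/-! Normal mixed unary (NMU) default theories -/

/-- An NMU default `α : β / β` with `α` empty or a single literal and `β` a single literal. -/
structure NMUDefault (V : Type) : Type where
  pre : Option (Lit V)
  concl : Lit V

/-- The general default rule corresponding to an NMU default. -/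
def NMUDefault.toDefault {V : Type} (d : NMUDefault V) : Default V :=
  ⟨d.pre.map Lit.toForm, [d.concl.toForm], d.concl.toForm⟩

/-- `E` is an extension of the NMU theory `(D, W)`. -/
def NMU.IsExtension {V : Type} (D : Set (NMUDefault V)) (W : Set (Lit V))
    (E : Set (Form V)) : Prop :=
  _root_.IsExtension (NMUDefault.toDefault '' D) (Lit.toForm '' W) E

/-- The NMU theory `(D, W)` entails the literal `l`. -/
def NMU.entails {V : Type} (D : Set (NMUDefault V)) (W : Set (Lit V)) (l : Lit V) : Prop :=
  _root_.entails (NMUDefault.toDefault '' D) (Lit.toForm '' W) l.toForm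

/-- An NMU theory is normal unary (NU) if every nonempty prerequisite is positive. -/
def IsNU {V : Type} (D : Set (NMUDefault V)) : Prop :=
  ∀ d ∈ D, ∀ p ∈ d.pre, p.pos = true

/-! Atomic dependency graph -/

/-- Edge `(x, y)` of the atomic dependency graph: `x` occurs in the prerequisite and `y`
in the consequent of some default of `D`. -/
def depEdge {V : Type} (D : Set (NMUDefault V)) (x y : V) : Prop :=
  ∃ d ∈ D, (∃ p ∈ d.pre, p.letter = x) ∧ d.concl.letter = y

/-- There is a path from `x` to `y` in the atomic dependency graph. -/
def depReach {V : Type} (D : Set (NMUDefault V)) : V → V → Prop :=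
  Relation.ReflTransGen (depEdge D)

/-- A set of literals `S` influences a literal `l`. -/
def influences {V : Type} (D : Set (NMUDefault V)) (S : Set (Lit V)) (l : Lit V) : Prop :=
  ∃ t ∈ S, depReach D t.letter l.letter

/-- The Kautz–Selman conditions on a generating sequence `seq` of defaults of the NMU theory
`(D, W)` together with its stage sets `Es`: `E₀ = W`, `Eᵢ = E_{i-1} ∪ concl(δᵢ)`,
`pre(δᵢ) ⊆ E_{i-1}`, no justification of a `δᵢ` is negated in `Eₙ`, and no further default
of `D` is applicable to `Eₙ`. -/
def KSConditions {V : Type} (D : Set (NMUDefault V)) (W : Set (Lit V))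
    (seq : List (NMUDefault V)) (Es : ℕ → Set (Lit V)) : Prop :=
  (∀ d ∈ seq, d ∈ D) ∧ Es 0 = W ∧
  (∀ i (h : i < seq.length), Es (i + 1) = Es i ∪ {(seq.get ⟨i, h⟩).concl}) ∧
  (∀ i (h : i < seq.length), ∀ p ∈ (seq.get ⟨i, h⟩).pre, p ∈ Es i) ∧
  (∀ i (h : i < seq.length), ((seq.get ⟨i, h⟩).concl).negate ∉ Es seq.length) ∧
  (¬ ∃ d ∈ D, (∀ p ∈ d.pre, p ∈ Es seq.length) ∧ d.concl ∉ Es seq.length ∧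
      d.concl.negate ∉ Es seq.length)

/-- `En` is the signature set of an extension of the NMU theory `(D, W)` (the extension
itself being the logical closure of `En`). -/
def IsSignatureSet {V : Type} (D : Set (NMUDefault V)) (W : Set (Lit V))
    (En : Set (Lit V)) : Prop :=
  ∃ seq Es, KSConditions D W seq Es ∧ En = Es seq.length

/-- `seq = δ₁, …, δₙ` is a proof of the literal `l` w.r.t. the NMU theory `(D, W)` and the
set of literals `E`: the defaults are from `D`, `l` is the consequent of `δₙ`, `¬l ∉ E`,
and each `δᵢ` is prerequisite-free, or its prerequisite is in `W`, or `δ₁, …, δ_{i-1}` is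
a proof of its prerequisite. -/
def IsProofList {V : Type} (D : Set (NMUDefault V)) (W E : Set (Lit V))
    (seq : List (NMUDefault V)) (l : Lit V) : Prop :=
  (∀ d ∈ seq, d ∈ D) ∧
  (∃ h : seq ≠ [], (seq.getLast h).concl = l) ∧
  l.negate ∉ E ∧
  ∀ i, (h : i < seq.length) → ∀ p ∈ (seq.get ⟨i, h⟩).pre,
    p ∈ W ∨ IsProofList D W E (seq.take i) p
termination_by seq.length
decreasing_by simp [List.length_take]; omega

/-- There is a proof of `l` w.r.t. `(D, W)` and `E`: either `l` by itself, if `l ∈ W`,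
or a sequence of defaults forming a proof of `l`. -/
def HasProof {V : Type} (D : Set (NMUDefault V)) (W E : Set (Lit V)) (l : Lit V) : Prop :=
  l ∈ W ∨ ∃ seq, IsProofList D W E seq l

/-- If `seq = δ₁, …, δₙ` is a generating-default sequence of an extension of the NMU theory
`(D, W)` with signature set `Eₙ`, then every literal `l ∈ Eₙ` is either in `W` (so `l`
itself is a proof of `l`) or has a proof which is a subsequence of `δ₁, …, δₙ`. -/
lemma proof_single {V : Type} {D : Set (NMUDefault V)} {W E : Set (Lit V)}
    {d : NMUDefault V} {l : Lit V} (hd : d ∈ D) (hpre : ∀ p ∈ d.pre, p ∈ W)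
    (hc : d.concl = l) (hneg : l.negate ∉ E) : IsProofList D W E [d] l := by
  rw [IsProofList]
  refine ⟨by simp_all, ⟨by simp, by simpa using hc⟩, hneg, ?_⟩
  intro i hi p hp
  have hi0 : i = 0 := by simp at hi; omega
  subst hi0
  exact Or.inl (hpre p (by simpa using hp))

lemma proof_append {V : Type} {D : Set (NMUDefault V)} {W E : Set (Lit V)}
    {s : List (NMUDefault V)} {p l : Lit V} (hs : IsProofList D W E s p)
    {d : NMUDefault V} (hd : d ∈ D) (hpre : d.pre = some p) (hc : d.concl = l)
    (hneg : l.negate ∉ E) : IsProofList D W E (s ++ [d]) l := by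
  have hs' := hs
  rw [IsProofList] at hs'
  obtain ⟨hmem, _, _, hrec⟩ := hs'
  rw [IsProofList]
  refine ⟨?_, ⟨by simp, by simpa using hc⟩, hneg, ?_⟩
  · intro d' hd'
    rcases List.mem_append.1 hd' with h | h
    · exact hmem d' h
    · rw [List.mem_singleton] at h; exact h ▸ hd
  · intro i hi q hq
    have hi1 : i < s.length + 1 := by simpa using hi
    rcases lt_or_eq_of_le (Nat.lt_succ_iff.1 hi1) with h | h
    · have hget : (s ++ [d]).get ⟨i, hi⟩ = s.get ⟨i, h⟩ := by
        simp [List.getElem_append_left h]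
      have htake : (s ++ [d]).take i = s.take i := by
        exact List.take_append_of_le_length (le_of_lt h)
      rw [htake]
      exact hrec i h q (hget ▸ hq)
    · subst h
      have hget : (s ++ [d]).get ⟨s.length, hi⟩ = d := by
        simp
      rw [hget, hpre] at hq
      have htake : (s ++ [d]).take s.length = s := List.take_left
      rw [htake]
      simp only [Option.mem_some_iff] at hq
      subst hq
      exact Or.inr hs

theorem generating_sublist_proof {V : Type} (D : Set (NMUDefault V)) (W : Set (Lit V))
    (hD : D.Finite) (hW : W.Finite)
    (seq : List (NMUDefault V)) (Es : ℕ → Set (Lit V))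
    (hKS : KSConditions D W seq Es) :
    ∀ l ∈ Es seq.length, l ∈ W ∨
      ∃ seq' : List (NMUDefault V), seq'.Sublist seq ∧
        IsProofList D W (Es seq.length) seq' l := by
  obtain ⟨hmemD, h0, hstep, hpre, hneg, -⟩ := hKS
  have key : ∀ i, i ≤ seq.length → ∀ l ∈ Es i, l ∈ W ∨
      ∃ seq' : List (NMUDefault V), seq'.Sublist (seq.take i) ∧
        IsProofList D W (Es seq.length) seq' l := by
    intro i
    induction i with
    | zero => intro _ l hl; exact Or.inl (h0 ▸ hl)
    | succ i ih =>
      intro hle l hl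
      have hi : i < seq.length := hle
      rw [hstep i hi] at hl
      have hmono : ∀ s' : List (NMUDefault V), s'.Sublist (seq.take i) → s'.Sublist (seq.take (i+1)) := by
        intro s' hsub
        refine hsub.trans ?_
        have : seq.take i = (seq.take (i+1)).take i := by
          rw [List.take_take]; congr 1; omega
        rw [this]
        exact List.take_sublist _ _
      rcases hl with hl | hl
      · rcases ih (le_of_lt hi) l hl with h | ⟨s', hsub, hpf⟩
        · exact Or.inl h
        · exact Or.inr ⟨s', hmono s' hsub, hpf⟩
      · -- l = concl of seq.get i
        simp only [Set.mem_singleton_iff] at hl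
        right
        set d := seq.get ⟨i, hi⟩ with hd
        have hdD : d ∈ D := hmemD d (List.get_mem _ _)
        have hlneg : l.negate ∉ Es seq.length := hl ▸ hneg i hi
        have hsubd : ∀ s' : List (NMUDefault V), s'.Sublist (seq.take i) →
            (s' ++ [d]).Sublist (seq.take (i+1)) := by
          intro s' hsub
          have : seq.take (i+1) = seq.take i ++ [d] := by
            rw [List.take_succ]
            congr 1
            rw [List.getElem?_eq_getElem hi]
            rfl
          rw [this]
          exact hsub.append (List.Sublist.refl _)
        cases hpd : d.pre with
        | none =>
          refine ⟨[d], hsubd [] (List.nil_sublist _), proof_single hdD ?_ hl.symm hlneg⟩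
          simp [hpd]
        | some p =>
          have hpEi : p ∈ Es i := hpre i hi p (by rw [Option.mem_def]; exact hpd)
          rcases ih (le_of_lt hi) p hpEi with h | ⟨s', hsub, hpf⟩
          · refine ⟨[d], hsubd [] (List.nil_sublist _), proof_single hdD ?_ hl.symm hlneg⟩
            intro q hq
            rw [hpd] at hq
            simp only [Option.mem_some_iff] at hq
            exact hq ▸ h
          · exact ⟨s' ++ [d], hsubd s' hsub,
              proof_append hpf hdD hpd hl.symm hlneg⟩
  intro l hl
  rcases key seq.length le_rfl l hl with h | ⟨s', hsub, hpf⟩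
  · exact Or.inl h
  · exact Or.inr ⟨s', by simpa using hsub, hpf⟩
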